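/- The functor j* : 𝒟 → 𝒟_Φ is left adjoint to the functor j_* : 𝒟_Φ → 𝒟. -/

import Mathlib

open CategoryTheory CategoryTheory.Limits

universe v u

/-- The category `𝒟_Φ`: same objects as `𝒟`; we write `j*x` for the object
corresponding to `x : 𝒟`. -/
structure DPhi (D : Type u) [Category.{v} D] [Preadditive D] (Φinv : D ⥤ D) where
  /-- the underlying object of `𝒟` -/
  base : D

variable {D : Type u} [Category.{v} D] [Preadditive D] [HasBinaryBiproducts D]
  (Φinv : D ⥤ D) [Φinv.Additive]

/-- `𝒟_Φ` as a category: `Hom(j*x, j*y) = Hom(x, y) × Hom(x, Φ⁻¹ y)`, with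
composition `(f, f') ∘ (g, g') = (f ∘ g, f' ∘ g + Φ⁻¹(f) ∘ g')`. -/
instance DPhi.category : Category (DPhi D Φinv) where
  Hom x y := (x.base ⟶ y.base) × (x.base ⟶ Φinv.obj y.base)
  id x := (𝟙 x.base, 0)
  comp p q := (p.1 ≫ q.1, p.1 ≫ q.2 + p.2 ≫ Φinv.map q.1)
  id_comp p := by dsimp; simp
  comp_id p := by dsimp; simp
  assoc p q r := by
    dsimp
    refine Prod.ext (by simp) ?_
    simp [Preadditive.add_comp, Preadditive.comp_add, add_assoc]

/-- The functor `j* : 𝒟 ⥤ 𝒟_Φ`, `x ↦ j*x`, `f ↦ (f, 0)`. -/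
def jStar : D ⥤ DPhi D Φinv where
  obj x := ⟨x⟩
  map f := (f, 0)
  map_id x := rfl
  map_comp f g := by dsimp; simp [CategoryStruct.comp]

/-- The functor `j_* : 𝒟_Φ ⥤ 𝒟`, sending `j*x` to `x ⊕ Φ⁻¹x` and the morphism
`(f, f')` to the upper-triangular matrix `[[f, f'], [0, Φ⁻¹f]]`. -/
noncomputable def jLower : DPhi D Φinv ⥤ D where
  obj x := x.base ⊞ Φinv.obj x.base
  map {x y} p := biprod.desc (biprod.lift p.1 p.2) (biprod.lift 0 (Φinv.map p.1))
  map_id x := by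
    apply biprod.hom_ext' <;> apply biprod.hom_ext <;>
      simp [CategoryStruct.id]
  map_comp {x y z} p q := by
    apply biprod.hom_ext' <;> apply biprod.hom_ext <;>
      simp [CategoryStruct.comp, Preadditive.add_comp, Preadditive.comp_add]

/-- the functor `j* : 𝒟 ⥤ 𝒟_Φ` is left adjoint to
`j_* : 𝒟_Φ ⥤ 𝒟`. -/
theorem jStar_adj_jLower : Nonempty (jStar Φinv ⊣ jLower Φinv) := by
  exact ⟨Adjunction.mkOfHomEquiv
    { homEquiv := fun x y =>
        { toFun := fun p => biprod.lift p.1 p.2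
          invFun := fun g => (g ≫ biprod.fst, g ≫ biprod.snd)
          left_inv := fun p => Prod.ext (biprod.lift_fst _ _) (biprod.lift_snd _ _)
          right_inv := fun g => by apply biprod.hom_ext; exacts [biprod.lift_fst _ _, biprod.lift_snd _ _] }
      homEquiv_naturality_left_symm := fun f g => by
        dsimp [jStar, jLower, CategoryStruct.comp]
        refine Prod.ext ?_ ?_
        · exact Category.assoc f g _
        · rw [zero_comp, add_zero]; exact Category.assoc f g _
      homEquiv_naturality_right := fun f g => by
        dsimp [jStar, jLower, CategoryStruct.comp]
        apply biprod.hom_ext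
        · erw [biprod.lift_fst, Category.assoc, biprod.lift_desc_assoc]; simp
        · erw [biprod.lift_snd, Category.assoc, biprod.lift_desc_assoc]; simp }⟩
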